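/- Let f(n) = min(f₄(n), g(n)) for n ≥ 11, where f₄(n) = (n⁴−14n³+47n²−34n)/24 and g is as defined. Then f is strictly increasing and satisfies 2·f(n) ≥ f(n+2) for all n ≥ 11. -/
import Mathlib


def f₄ (n : ℤ) : ℤ := (n ^ 4 - 14 * n ^ 3 + 47 * n ^ 2 - 34 * n) / 24

def g (n : ℤ) : ℤ :=
  if n % 2 = 0 then 2 ^ (n / 2 - 6).toNat * 89 else 2 ^ ((n + 1) / 2 - 6).toNat * 55

def f (n : ℤ) : ℤ := min (f₄ n) (g n)

lemma dvd24 (n : ℤ) : (24 : ℤ) ∣ (n ^ 4 - 14 * n ^ 3 + 47 * n ^ 2 - 34 * n) := by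
  have h : ((n ^ 4 - 14 * n ^ 3 + 47 * n ^ 2 - 34 * n : ℤ) : ZMod 24) = 0 := by
    push_cast
    have : ∀ x : ZMod 24, x ^ 4 - 14 * x ^ 3 + 47 * x ^ 2 - 34 * x = 0 := by decide
    exact this _
  exact (ZMod.intCast_zmod_eq_zero_iff_dvd _ 24).mp h

lemma f₄24 (n : ℤ) : 24 * f₄ n = n ^ 4 - 14 * n ^ 3 + 47 * n ^ 2 - 34 * n := by
  unfold f₄
  exact Int.mul_ediv_cancel' (dvd24 n)

lemma f₄A {n : ℤ} (hn : 16 ≤ n) : f₄ (n + 2) ≤ 2 * f₄ n := by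
  have h1 := f₄24 n
  have h2 := f₄24 (n + 2)
  nlinarith [sq_nonneg n, sq_nonneg (n - 16), sq_nonneg (n - 20)]

lemma f₄B {n : ℤ} (hn : 8 ≤ n) : f₄ n < f₄ (n + 1) := by
  have h1 := f₄24 n
  have h2 := f₄24 (n + 1)
  nlinarith [sq_nonneg n, sq_nonneg (n - 8), sq_nonneg (n - 10)]

lemma gstep {n : ℤ} (hn : 11 ≤ n) : g (n + 2) = 2 * g n := by
  unfold g
  have hm : (n + 2) % 2 = n % 2 := by omega
  rw [hm]
  rcases eq_or_ne (n % 2) 0 with h | h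
  · rw [if_pos h, if_pos h]
    have he : ((n + 2) / 2 - 6).toNat = (n / 2 - 6).toNat + 1 := by omega
    rw [he, pow_succ]; ring
  · rw [if_neg h, if_neg h]
    have he : ((n + 2 + 1) / 2 - 6).toNat = ((n + 1) / 2 - 6).toNat + 1 := by omega
    rw [he, pow_succ]; ring

lemma keyL : ∀ k : ℕ, f₄ (26 + k) ≤ g (26 + k) := by
  intro k
  induction k using Nat.strong_induction_on with
  | _ k ih =>
    match k with
    | 0 => decide
    | 1 => decide
    | (m + 2) =>
      have h2 := ih m (by omega)
      push_cast
      rw [show (26 : ℤ) + ((m : ℤ) + 2) = 26 + (m : ℤ) + 2 by ring]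
      calc f₄ (26 + (m:ℤ) + 2) ≤ 2 * f₄ (26 + (m:ℤ)) := f₄A (by omega)
        _ ≤ 2 * g (26 + (m:ℤ)) := by linarith
        _ = g (26 + (m:ℤ) + 2) := (gstep (by omega)).symm

lemma keyL' {n : ℤ} (hn : 26 ≤ n) : f₄ n ≤ g n := by
  have : n = 26 + ((n - 26).toNat : ℤ) := by omega
  rw [this]; exact keyL _

lemma feq {n : ℤ} (hn : 26 ≤ n) : f n = f₄ n := min_eq_left (keyL' hn)

/-- `f = min(f₄, g)` is strictly increasing and satisfies `2·f(n) ≥ f(n+2)`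
for all `n ≥ 11`. -/
theorem stmt8 :
    (∀ n : ℤ, 11 ≤ n → f n < f (n + 1)) ∧ (∀ n : ℤ, 11 ≤ n → f (n + 2) ≤ 2 * f n) := by
  constructor
  · intro n hn
    rcases le_or_gt n 25 with h | h
    · interval_cases n <;> decide
    · rw [feq (show (26:ℤ) ≤ n by omega), feq (show (26:ℤ) ≤ n + 1 by omega)]
      exact f₄B (by omega)
  · intro n hn
    rcases le_or_gt n 25 with h | h
    · interval_cases n <;> decide
    · rw [feq (show (26:ℤ) ≤ n by omega)]
      calc f (n + 2) ≤ f₄ (n + 2) := min_le_left _ _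
        _ ≤ 2 * f₄ n := f₄A (by omega)
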